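/- Let J = {b₁, …, b_k} ⊂ [0,∞) be a finite set and κ₁, …, κ_k > 0, and define μ̃(x) := μ(x) − Σ_{j : x ≥ b_j} κ_j. Let ψ̃ : [0,∞) → ℝ be continuously differentiable, twice continuously differentiable on [0,∞)∖J, with ψ̃(0) = 0, ψ̃'(x) > 0 for all x ≥ 0, and ½σ(x)²ψ̃''(x) + μ̃(x)ψ̃'(x) − r·ψ̃(x) = 0 for all x ∈ [0,∞)∖J. If x ≥ 0 is such that x ∉ J and ψ̃''(y) ≤ 0 for all y ∈ [0,x]∖J, then x < c. In particular, the inflection point of ψ̃ is bounded by the constant c, uniformly in the choice of b₁, …, b_k. -/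

import Mathlib

open Set Filter

/-- If `f` is continuous and at every point of `Ioo a x` outside a finite exceptional set it is
differentiable with nonpositive derivative, then it is antitone on `Icc a x`. -/
lemma antitone_aux (f : ℝ → ℝ) (hf : Continuous f) (s : Finset ℝ) :
    ∀ a x : ℝ, (∀ y ∈ Ioo a x, y ∉ s → DifferentiableAt ℝ f y ∧ deriv f y ≤ 0) →
    AntitoneOn f (Icc a x) := by
  induction s using Finset.induction with
  | empty =>
    intro a x h
    apply antitoneOn_of_deriv_nonpos (convex_Icc a x) hf.continuousOn
    · intro y hy
      rw [interior_Icc] at hy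
      exact ((h y hy (by simp)).1).differentiableWithinAt
    · intro y hy
      rw [interior_Icc] at hy
      exact (h y hy (by simp)).2
  | @insert p t hp ih =>
    intro a x h
    by_cases hpm : p ∈ Ioo a x
    · have h1 : AntitoneOn f (Icc a p) := by
        apply ih
        intro y hy hyt
        refine h y ⟨hy.1, hy.2.trans hpm.2⟩ ?_
        simp only [Finset.mem_insert, not_or]
        exact ⟨ne_of_lt hy.2, hyt⟩
      have h2 : AntitoneOn f (Icc p x) := by
        apply ih
        intro y hy hyt
        refine h y ⟨hpm.1.trans hy.1, hy.2⟩ ?_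
        simp only [Finset.mem_insert, not_or]
        exact ⟨(ne_of_gt hy.1), hyt⟩
      intro y hy z hz hyz
      rcases le_total z p with hzp | hpz
      · exact h1 ⟨hy.1, hyz.trans hzp⟩ ⟨hz.1, hzp⟩ hyz
      · rcases le_total y p with hyp | hpy
        · calc f z ≤ f p := h2 ⟨le_refl p, hpm.2.le⟩ ⟨hpz, hz.2⟩ hpz
            _ ≤ f y := h1 ⟨hy.1, hyp⟩ ⟨hpm.1.le, le_refl p⟩ hyp
        · exact h2 ⟨hpy, hy.2⟩ ⟨hpy.trans hyz, hz.2⟩ hyz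
    · apply ih
      intro y hy hyt
      refine h y hy ?_
      simp only [Finset.mem_insert, not_or]
      exact ⟨fun hyp => hpm (hyp ▸ hy), hyt⟩

/-- the inflection point of the fundamental increasing solution ψ̃
for the drift with finitely many negative jumps is bounded by c, uniformly in the
jump locations: if x ∉ J and ψ̃'' ≤ 0 on [0,x] ∖ J then x < c. -/
theorem stmt_13
    (r c : ℝ) (hr : 0 < r) (hc : 0 < c)
    (μ σ : ℝ → ℝ) (hμ : ContDiff ℝ 1 μ) (hσ : ContDiff ℝ 1 σ)
    (hσpos : ∀ x ≥ (0:ℝ), 0 < σ x ^ 2)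
    (hμderiv : ∀ x ≥ (0:ℝ), deriv μ x < r)
    (hμc : ∀ x ≥ c, μ x ≤ r * x - 1 / c)
    (k : ℕ) (b κ : Fin k → ℝ) (hbnn : ∀ j, 0 ≤ b j) (hκ : ∀ j, 0 < κ j)
    (μt : ℝ → ℝ)
    (hμt : ∀ x, μt x = μ x - ∑ j, (if b j ≤ x then κ j else 0))
    (ψt : ℝ → ℝ)
    (hψtC1 : ContDiff ℝ 1 ψt)
    (hψtC2 : ContDiffOn ℝ 2 ψt (Ici (0:ℝ) \ Set.range b))
    (hψt0 : ψt 0 = 0)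
    (hψtdpos : ∀ x ≥ (0:ℝ), 0 < deriv ψt x)
    (hψtODE : ∀ x, 0 ≤ x → x ∉ Set.range b →
      (1/2) * σ x ^ 2 * deriv (deriv ψt) x + μt x * deriv ψt x - r * ψt x = 0) :
    ∀ x, 0 ≤ x → x ∉ Set.range b →
      (∀ y, 0 ≤ y → y ≤ x → y ∉ Set.range b → deriv (deriv ψt) y ≤ 0) →
      x < c := by
  intro x hx0 hxJ hconc
  by_contra hxc
  push_neg at hxc  -- c ≤ x
  -- deriv ψt is continuous
  have hcontd : Continuous (deriv ψt) := hψtC1.continuous_deriv le_rfl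
  -- range b as a finset
  set s : Finset ℝ := Finset.univ.image b with hs
  have hsrange : ∀ y : ℝ, y ∈ s ↔ y ∈ Set.range b := by
    intro y; simp [hs, Set.mem_range]
  -- deriv ψt is antitone on [0, x]
  have hanti : AntitoneOn (deriv ψt) (Icc 0 x) := by
    apply antitone_aux (deriv ψt) hcontd s
    intro y hy hys
    have hyJ : y ∉ Set.range b := fun h => hys ((hsrange y).2 h)
    -- the set Ici 0 \ range b is a neighborhood of y
    have hnhds : Ici (0:ℝ) \ Set.range b ∈ nhds y := by
      apply Filter.inter_mem
      · exact Ici_mem_nhds hy.1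
      · show (Set.range b)ᶜ ∈ nhds y; rw [mem_nhds_iff]
        refine ⟨(Set.range b)ᶜ, fun z hz => hz, ?_, hyJ⟩
        exact (Set.finite_range b).isClosed.isOpen_compl
    obtain ⟨U, hUsub, hUopen, hyU⟩ := mem_nhds_iff.1 hnhds
    have hC2U : ContDiffOn ℝ 2 ψt U := hψtC2.mono hUsub
    have h21 : (2:WithTop ℕ∞) = 1 + 1 := by norm_num
    rw [h21, contDiffOn_succ_iff_deriv_of_isOpen hUopen] at hC2U
    have hdiff : DifferentiableAt ℝ (deriv ψt) y := by
      have := hC2U.2.2.differentiableOn (by norm_num)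
      exact (this y hyU).differentiableAt (hUopen.mem_nhds hyU)
    exact ⟨hdiff, hconc y hy.1.le hy.2.le hyJ⟩
  -- ψt x ≥ x * deriv ψt x
  have hkey : x * deriv ψt x ≤ ψt x := by
    set K := deriv ψt x with hK
    have hg : ∀ y, deriv (fun z => ψt z - K * z) y = deriv ψt y - K := by
      intro y
      rw [deriv_fun_sub (hψtC1.differentiable one_ne_zero y) (by fun_prop)]
      have hK' : deriv (fun z : ℝ => K * z) y = K := by
        simpa using ((hasDerivAt_id y).const_mul K).deriv
      simp only [hK']
    have hmono : MonotoneOn (fun z => ψt z - K * z) (Icc 0 x) := by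
      apply monotoneOn_of_deriv_nonneg (convex_Icc 0 x)
      · exact (hψtC1.continuous.sub (by fun_prop)).continuousOn
      · intro y hy
        exact ((hψtC1.differentiable one_ne_zero y).sub (by fun_prop)).differentiableWithinAt
      · intro y hy
        rw [interior_Icc] at hy
        rw [hg]
        have := hanti ⟨hy.1.le, hy.2.le⟩ ⟨hx0, le_refl x⟩ hy.2.le
        linarith
    have := hmono ⟨le_refl 0, hx0⟩ ⟨hx0, le_refl x⟩ hx0
    simp [hψt0] at this
    linarith
  -- assemble the contradiction at the point x
  have hode := hψtODE x hx0 hxJ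
  have hdd : deriv (deriv ψt) x ≤ 0 := hconc x hx0 le_rfl hxJ
  have hσx : 0 < σ x ^ 2 := hσpos x hx0
  have hdx : 0 < deriv ψt x := hψtdpos x hx0
  have hμtx : μt x ≤ r * x - 1 / c := by
    rw [hμt x]
    have hsum : 0 ≤ ∑ j, (if b j ≤ x then κ j else 0) := by
      apply Finset.sum_nonneg
      intro j _
      split <;> [exact (hκ j).le; rfl]
    have := hμc x hxc
    linarith
  have h1 : r * ψt x ≤ μt x * deriv ψt x := by nlinarith
  have h2 : μt x * deriv ψt x ≤ (r * x - 1 / c) * deriv ψt x :=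
    mul_le_mul_of_nonneg_right hμtx hdx.le
  have h3 : r * (x * deriv ψt x) ≤ r * ψt x := by nlinarith
  have hcinv : 0 < 1 / c := by positivity
  nlinarith [mul_pos hcinv hdx]
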